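/- arXiv:1801.08852 — 2 statements merged into one kernel-verified Lean document; each statement's English description precedes it below -/
import Mathlib

section
/- Let n ≥ 2, a > 0, and α = (α_1,…,α_n) ∈ (0,∞)^n with a α_k < 1 for all k; set β_k := (1 − a α_k)/α_k. Let μ ∈ ℝ^n and let Σ ∈ ℝ^{n×n} be a symmetric positive semidefinite matrix. Let ρ be the Borel measure on [0,∞)^n \ {0} given by ρ = ρ_0 + Σ_{k=1}^n ρ_k, where ρ_0 is the pushforward of the measure a s^{−1} e^{−s} ds on (0,∞) under the map s ↦ s·α, and ρ_k is the pushforward of the measure β_k s^{−1} e^{−s/α_k} ds on (0,∞) under the map s ↦ s·e_k (e_k the k-th standard basis vector). Then for every θ ∈ ℝ^n, ∫ (exp(i⟨θ, t⋄μ⟩ − ½‖θ‖²_{t⋄Σ}) − 1) ρ(dt) = −a Log(1 − i⟨α⋄μ, θ⟩ + ½‖θ‖²_{α⋄Σ}) − Σ_{k=1}^n β_k Log(1 − i α_k μ_k θ_k + ½ α_k θ_k² Σ_{kk}). -/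
open MeasureTheory Complex
open scoped NNReal ENNReal

set_option maxHeartbeats 1000000

noncomputable section

/-- Euclidean inner product on `ℝ^n`. -/
def dot {n : ℕ} (x y : Fin n → ℝ) : ℝ := ∑ k, x k * y k

/-- Quadratic form `‖θ‖²_A = θ A θᵀ`. -/
def quad {n : ℕ} (A : Matrix (Fin n) (Fin n) ℝ) (θ : Fin n → ℝ) : ℝ :=
  ∑ k, ∑ l, θ k * A k l * θ l

/-- Outer product `t ⋄ μ` of vectors, `(t ⋄ μ)_k = t_k μ_k`. -/
def diaV {n : ℕ} (t μ : Fin n → ℝ) : Fin n → ℝ := fun k => t k * μ k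

/-- Outer product `t ⋄ Σ`, `(t ⋄ Σ)_{kl} = Σ_{kl} min(t_k, t_l)`. -/
def diaM {n : ℕ} (t : Fin n → ℝ) (A : Matrix (Fin n) (Fin n) ℝ) :
    Matrix (Fin n) (Fin n) ℝ := Matrix.of fun k l => A k l * min (t k) (t l)

/-- Lévy exponent of the weak variance-alpha-gamma process `WVAG^n(a, α, μ, Σ)`:
`Ψ(θ) = -a Log(1 - i⟨α⋄μ,θ⟩ + ½‖θ‖²_{α⋄Σ}) - ∑ₖ βₖ Log(1 - i αₖ μₖ θₖ + ½ αₖ θₖ² Σₖₖ)`,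
where `βₖ = (1 - a αₖ)/αₖ`. -/
def Ψwvag {n : ℕ} (a : ℝ) (α μ : Fin n → ℝ) (S : Matrix (Fin n) (Fin n) ℝ)
    (θ : Fin n → ℝ) : ℂ :=
  -(a : ℂ) * Complex.log (1 - Complex.I * (dot (diaV α μ) θ : ℂ) +
      (quad (diaM α S) θ : ℂ) / 2) -
    ∑ k, (((1 - a * α k) / α k : ℝ) : ℂ) *
      Complex.log (1 - Complex.I * ((α k * μ k * θ k : ℝ) : ℂ) +
        ((α k * θ k ^ 2 * S k k : ℝ) : ℂ) / 2)

/-- The Lévy measure `a s⁻¹ e^{-bs} ds` on `(0,∞)` of the gamma subordinator `Γ_S(a,b)`. -/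
def gammaLevyMeasure (a b : ℝ) : Measure ℝ :=
  (volume.restrict (Set.Ioi (0 : ℝ))).withDensity
    (fun s => ENNReal.ofReal (a * s⁻¹ * Real.exp (-(b * s))))

/-- The Lévy measure of the alpha-gamma subordinator `AG_S^n(a, α)`:
`ρ = ρ₀ + ∑ₖ ρₖ`, where `ρ₀` is the pushforward of `a s⁻¹ e^{-s} ds` under `s ↦ s • α`
and `ρₖ` is the pushforward of `βₖ s⁻¹ e^{-s/αₖ} ds` under `s ↦ s eₖ`. -/
def agLevyMeasure {n : ℕ} (a : ℝ) (α : Fin n → ℝ) : Measure (Fin n → ℝ) :=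
  Measure.map (fun s : ℝ => s • α) (gammaLevyMeasure a 1) +
    ∑ k : Fin n, Measure.map (fun s : ℝ => Pi.single k s)
      (gammaLevyMeasure ((1 - a * α k) / α k) (1 / α k))


lemma norm_cexp_sub_one_le {w : ℂ} (hw : w.re ≤ 0) : ‖Complex.exp w - 1‖ ≤ ‖w‖ := by
  have h : ∀ t ∈ Set.Icc (0:ℝ) 1, HasDerivWithinAt (fun t : ℝ => Complex.exp (t • w)) (w * Complex.exp (t • w)) (Set.Icc 0 1) t := by
    intro t _
    have h1 : HasDerivAt (fun t : ℝ => (t : ℂ) * w) w t := by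
      simpa using (hasDerivAt_id t).ofReal_comp.mul_const w
    exact (by simpa [Complex.real_smul, mul_comm, Function.comp_def] using
      (Complex.hasDerivAt_exp ((t:ℂ)*w)).comp t h1 : HasDerivAt (fun t : ℝ => Complex.exp (t • w)) (w * Complex.exp (t • w)) t).hasDerivWithinAt
  have hb : ∀ t ∈ Set.Ico (0:ℝ) 1, ‖w * Complex.exp (t • w)‖ ≤ ‖w‖ := by
    intro t ht
    rw [norm_mul, Complex.norm_exp]
    have h2 : (t • w).re ≤ 0 := by
      rw [Complex.real_smul, Complex.re_ofReal_mul]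
      exact mul_nonpos_of_nonneg_of_nonpos ht.1 hw
    calc ‖w‖ * Real.exp ((t • w).re) ≤ ‖w‖ * 1 :=
          mul_le_mul_of_nonneg_left (by simpa using Real.exp_le_one_iff.mpr h2) (norm_nonneg w)
      _ = ‖w‖ := mul_one _
  have := norm_image_sub_le_of_norm_deriv_le_segment' h hb 1 (Set.right_mem_Icc.2 zero_le_one)
  simpa using this

lemma cexp_Ioi_integral {c : ℂ} (hc : 0 < c.re) :
    ∫ s in Set.Ioi (0:ℝ), Complex.exp (-(c * s)) = c⁻¹ := by
  have hc0 : c ≠ 0 := fun h => by simp [h] at hc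
  have hder : ∀ s ∈ Set.Ici (0:ℝ), HasDerivAt (fun s : ℝ => -c⁻¹ * Complex.exp (-(c * s)))
      (Complex.exp (-(c * s))) s := by
    intro s _
    have h1 : HasDerivAt (fun s : ℝ => -(c * (s:ℂ))) (-c) s := by
      simpa using ((hasDerivAt_id s).ofReal_comp.const_mul c).fun_neg
    have := ((Complex.hasDerivAt_exp (-(c * s))).comp s h1).const_mul (-c⁻¹)
    convert this using 1
    · exact rfl
    · exact rfl
    rw [mul_neg, neg_mul_neg, mul_comm (Complex.exp _) c, ← mul_assoc, inv_mul_cancel₀ hc0, one_mul]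
  have hint : IntegrableOn (fun s : ℝ => Complex.exp (-(c * s))) (Set.Ioi (0:ℝ)) := by
    have h1 : IntegrableOn (fun s : ℝ => Real.exp (-c.re * s)) (Set.Ioi (0:ℝ)) :=
      exp_neg_integrableOn_Ioi 0 hc
    refine h1.mono' ?_ ?_
    · exact (Complex.continuous_exp.comp ((continuous_const.mul Complex.continuous_ofReal).neg)).aestronglyMeasurable
    · filter_upwards with s
      rw [Complex.norm_exp]
      simp [neg_mul]
  have hlim : Filter.Tendsto (fun s : ℝ => -c⁻¹ * Complex.exp (-(c * s))) Filter.atTop (nhds 0) := by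
    rw [tendsto_zero_iff_norm_tendsto_zero]
    have heq : (fun s : ℝ => ‖-c⁻¹ * Complex.exp (-(c * s))‖) = fun s => ‖c⁻¹‖ * Real.exp (-(c.re * s)) := by
      funext s
      rw [norm_mul, norm_neg, Complex.norm_exp]
      simp
    rw [heq]
    have h2 : Filter.Tendsto (fun s : ℝ => Real.exp (-(c.re * s))) Filter.atTop (nhds 0) := by
      apply Real.tendsto_exp_atBot.comp
      exact Filter.tendsto_neg_atBot_iff.mpr (Filter.Tendsto.const_mul_atTop hc Filter.tendsto_id)
    simpa using h2.const_mul ‖c⁻¹‖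
  have := integral_Ioi_of_hasDerivAt_of_tendsto' hder hint hlim
  rw [this]
  simp

lemma frullani_cont_on (aa b : ℝ) (z : ℂ) :
    ContinuousOn (fun s : ℝ => (aa * s⁻¹ * Real.exp (-(b * s))) •
      (Complex.exp (-(z * s)) - 1)) (Set.Ioi (0:ℝ)) := by
  apply ContinuousOn.fun_smul
  · exact ((continuousOn_const.mul (continuousOn_inv₀.mono (by intro x hx; exact ne_of_gt hx))).mul
      (Real.continuous_exp.comp (continuous_const.mul continuous_id).neg).continuousOn)
  · exact ((Complex.continuous_exp.comp
      ((continuous_const.mul Complex.continuous_ofReal).neg)).sub continuous_const).continuousOn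

lemma frullani_integrable (aa b : ℝ) (hb : 0 < b) (z : ℂ) (hz : 0 ≤ z.re) :
    IntegrableOn (fun s : ℝ => (aa * s⁻¹ * Real.exp (-(b * s))) •
      (Complex.exp (-(z * s)) - 1)) (Set.Ioi (0:ℝ)) := by
  have h1 : IntegrableOn (fun s : ℝ => Real.exp (-b * s)) (Set.Ioi (0:ℝ)) :=
    exp_neg_integrableOn_Ioi 0 hb
  refine ((h1.const_mul (|aa| * ‖z‖)).mono'
    ((frullani_cont_on aa b z).aestronglyMeasurable measurableSet_Ioi) ?_)
  filter_upwards [ae_restrict_mem measurableSet_Ioi] with s hs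
  have hs0 : (0:ℝ) < s := hs
  rw [norm_smul]
  have hexp : ‖Complex.exp (-(z * s)) - 1‖ ≤ ‖z‖ * s := by
    have := norm_cexp_sub_one_le (w := -(z * s)) (by
      simp only [Complex.neg_re, Complex.mul_re, Complex.ofReal_re, Complex.ofReal_im]
      nlinarith [hz, hs0.le])
    calc ‖Complex.exp (-(z * s)) - 1‖ ≤ ‖-(z * (s:ℂ))‖ := this
      _ = ‖z‖ * s := by
          rw [norm_neg, norm_mul, Complex.norm_real, Real.norm_of_nonneg hs0.le]
  calc ‖aa * s⁻¹ * Real.exp (-(b * s))‖ * ‖Complex.exp (-(z * s)) - 1‖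
      ≤ ‖aa * s⁻¹ * Real.exp (-(b * s))‖ * (‖z‖ * s) :=
        mul_le_mul_of_nonneg_left hexp (norm_nonneg _)
    _ = |aa| * s⁻¹ * Real.exp (-(b * s)) * (‖z‖ * s) := by
        rw [Real.norm_eq_abs, abs_mul, abs_mul, _root_.abs_of_nonneg (inv_nonneg.2 hs0.le),
          _root_.abs_of_nonneg (Real.exp_pos _).le]
    _ = |aa| * ‖z‖ * Real.exp (-b * s) := by
        field_simp

lemma frullani_core (b : ℝ) (hb : 0 < b) (z : ℂ) (hz : 0 ≤ z.re) :
    ∫ s in Set.Ioi (0:ℝ), ((1:ℝ) * s⁻¹ * Real.exp (-(b * s))) • (Complex.exp (-(z * s)) - 1)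
      = -(Complex.log ((b:ℂ) + z) - Complex.log (b:ℂ)) := by
  set F : ℝ → ℝ → ℂ := fun u s => ((1:ℝ) * s⁻¹ * Real.exp (-(b * s))) •
    (Complex.exp (-((u:ℂ) * z * s)) - 1) with hF
  set F' : ℝ → ℝ → ℂ := fun u s => ((1:ℝ) * s⁻¹ * Real.exp (-(b * s))) •
    (Complex.exp (-((u:ℂ) * z * s)) * (-(z * s))) with hF'
  set φ : ℝ → ℂ := fun u => ∫ s in Set.Ioi (0:ℝ), F u s with hφ
  have hderF : ∀ (u s : ℝ), HasDerivAt (fun u : ℝ => F u s) (F' u s) u := by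
    intro u s
    have h1 : HasDerivAt (fun u : ℝ => -((u:ℂ) * z * s)) (-(z * s)) u := by
      simpa [mul_assoc] using ((Complex.ofRealCLM.hasDerivAt.mul_const (z * (s:ℂ)))).fun_neg
    exact (((Complex.hasDerivAt_exp _).comp u h1).sub_const 1).fun_const_smul _
  set ε : ℝ := b / (2 * (‖z‖ + 1)) with hε
  have hεpos : 0 < ε := by positivity
  have hεz : ε * ‖z‖ ≤ b / 2 := by
    rw [hε, div_mul_eq_mul_div]
    rw [div_le_div_iff₀ (by positivity) (by norm_num)]
    nlinarith [norm_nonneg z, hb]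
  have hcontF' : ∀ u : ℝ, ContinuousOn (fun s => F' u s) (Set.Ioi (0:ℝ)) := by
    intro u
    apply ContinuousOn.fun_smul
    · exact ((continuousOn_const.mul (continuousOn_inv₀.mono (fun x hx => ne_of_gt hx))).mul
        (Real.continuous_exp.comp (continuous_const.mul continuous_id).neg).continuousOn)
    · exact ((Complex.continuous_exp.comp
        ((continuous_const.mul Complex.continuous_ofReal).neg)).mul
        ((continuous_const.mul Complex.continuous_ofReal).neg)).continuousOn
  have hφder : ∀ u₀ ∈ Set.Icc (0:ℝ) 1, HasDerivAt φ (-(z / ((b:ℂ) + u₀ * z))) u₀ := by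
    intro u₀ hu₀
    have hre : 0 < ((b:ℂ) + u₀ * z).re := by
      simp only [Complex.add_re, Complex.ofReal_re, Complex.mul_re, Complex.ofReal_im,
        Complex.ofReal_im, zero_mul, sub_zero]
      nlinarith [mul_nonneg hu₀.1 hz]
    have key := hasDerivAt_integral_of_dominated_loc_of_deriv_le (F := F) (F' := F')
      (x₀ := u₀) (s := Metric.ball u₀ ε) (bound := fun s => ‖z‖ * Real.exp (-(b/2) * s))
      (μ := volume.restrict (Set.Ioi (0:ℝ))) (Metric.ball_mem_nhds u₀ hεpos)
      (by
        filter_upwards with u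
        exact ((frullani_cont_on 1 b ((u:ℂ) * z)).aestronglyMeasurable measurableSet_Ioi))
      (frullani_integrable 1 b hb ((u₀:ℂ) * z)
        (by simp only [Complex.mul_re, Complex.ofReal_re, Complex.ofReal_im, zero_mul, sub_zero]
            exact mul_nonneg hu₀.1 hz))
      (((hcontF' u₀)).aestronglyMeasurable measurableSet_Ioi)
      (by
        filter_upwards [ae_restrict_mem measurableSet_Ioi] with s hs u hu
        have hs0 : (0:ℝ) < s := hs
        have h1 : |u - u₀| < ε := by have := Metric.mem_ball.1 hu; rwa [Real.dist_eq] at this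
        have h2 : -ε < u := by cases' abs_lt.1 h1 with hl _; linarith [hu₀.1]
        have hhalf : b / 2 ≤ b + u * z.re := by
          have h3 : -ε * z.re ≤ u * z.re := mul_le_mul_of_nonneg_right h2.le hz
          have h4 : ε * z.re ≤ ε * ‖z‖ := mul_le_mul_of_nonneg_left (Complex.re_le_norm z) hεpos.le
          nlinarith
        have hnorm : ‖F' u s‖ = s⁻¹ * Real.exp (-(b * s)) *
            (Real.exp (-(u * z.re * s)) * (‖z‖ * s)) := by
          have hre2 : (-((u:ℂ) * z * (s:ℂ))).re = -(u * z.re * s) := by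
            simp [Complex.mul_re]
          simp only [hF', norm_smul, norm_mul, norm_neg, Real.norm_eq_abs,
            Complex.norm_exp, Complex.norm_real, hre2]
          rw [_root_.abs_of_nonneg (inv_nonneg.2 hs0.le),
            _root_.abs_of_nonneg (Real.exp_pos _).le, _root_.abs_of_nonneg hs0.le, abs_one,
            one_mul]
        rw [hnorm]
        have e1 : Real.exp (-(b * s)) * Real.exp (-(u * z.re * s)) =
            Real.exp (-((b + u * z.re) * s)) := by rw [← Real.exp_add]; ring_nf
        have e2 : Real.exp (-((b + u * z.re) * s)) ≤ Real.exp (-(b/2) * s) :=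
          Real.exp_le_exp.2 (by nlinarith)
        calc s⁻¹ * Real.exp (-(b * s)) * (Real.exp (-(u * z.re * s)) * (‖z‖ * s))
            = (s⁻¹ * s) * ‖z‖ * (Real.exp (-(b * s)) * Real.exp (-(u * z.re * s))) := by ring
          _ = ‖z‖ * Real.exp (-((b + u * z.re) * s)) := by
              rw [inv_mul_cancel₀ hs0.ne', e1]; ring
          _ ≤ ‖z‖ * Real.exp (-(b/2) * s) := mul_le_mul_of_nonneg_left e2 (norm_nonneg z))
      ((exp_neg_integrableOn_Ioi 0 (half_pos hb)).const_mul ‖z‖)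
      (by filter_upwards with s u _; exact hderF u s)
    have hval : (∫ s in Set.Ioi (0:ℝ), F' u₀ s) = -(z / ((b:ℂ) + u₀ * z)) := by
      have hae : ∀ᵐ s ∂(volume.restrict (Set.Ioi (0:ℝ))), F' u₀ s =
          -z * Complex.exp (-(((b:ℂ) + u₀ * z) * s)) := by
        filter_upwards [ae_restrict_mem measurableSet_Ioi] with s hs
        have hs0 : (0:ℝ) < s := hs
        have hsC : (s:ℂ) ≠ 0 := Complex.ofReal_ne_zero.mpr hs0.ne'
        show ((1:ℝ) * s⁻¹ * Real.exp (-(b * s))) •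
            (Complex.exp (-((u₀:ℂ) * z * s)) * (-(z * s))) = _
        rw [Complex.real_smul]
        push_cast
        have hcomb : Complex.exp (-((u₀:ℂ) * z * s)) * Complex.exp (-((b:ℂ) * s)) =
            Complex.exp (-(((b:ℂ) + u₀ * z) * s)) := by
          rw [← Complex.exp_add]; ring_nf
        rw [← hcomb]
        field_simp
      rw [integral_congr_ae hae, integral_const_mul, cexp_Ioi_integral hre]
      rw [div_eq_mul_inv, neg_mul]
    rw [← hval]
    exact key.2
  -- antiderivative on the log side
  set ψ : ℝ → ℂ := fun u => -(Complex.log ((b:ℂ) + u * z) - Complex.log (b:ℂ)) with hψ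
  have hψder : ∀ u₀ ∈ Set.Icc (0:ℝ) 1, HasDerivAt ψ (-(z / ((b:ℂ) + u₀ * z))) u₀ := by
    intro u₀ hu₀
    have hre : 0 < ((b:ℂ) + u₀ * z).re := by
      simp only [Complex.add_re, Complex.ofReal_re, Complex.mul_re, Complex.ofReal_im,
        zero_mul, sub_zero]
      nlinarith [mul_nonneg hu₀.1 hz]
    have hslit : ((b:ℂ) + u₀ * z) ∈ Complex.slitPlane := Or.inl hre
    have haff : HasDerivAt (fun u : ℝ => (b:ℂ) + u * z) z u₀ := by
      simpa using (Complex.ofRealCLM.hasDerivAt.mul_const z).const_add (b:ℂ)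
    have hlog := (Complex.hasDerivAt_log hslit).comp u₀ haff
    have : HasDerivAt (fun u : ℝ => Complex.log ((b:ℂ) + u * z))
        (((b:ℂ) + u₀ * z)⁻¹ * z) u₀ := hlog
    have h2 := (this.sub_const (Complex.log (b:ℂ))).fun_neg
    convert h2 using 1
    · exact rfl
    rw [div_eq_mul_inv]; ring
  -- FTC on both
  have huIcc : Set.uIcc (0:ℝ) 1 = Set.Icc 0 1 := Set.uIcc_of_le zero_le_one
  have hcont' : ContinuousOn (fun u : ℝ => -(z / ((b:ℂ) + u * z))) (Set.Icc (0:ℝ) 1) := by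
    apply ContinuousOn.neg
    apply ContinuousOn.div continuousOn_const
    · exact (continuous_const.add (Complex.continuous_ofReal.mul continuous_const)).continuousOn
    · intro u hu
      intro h
      have hre : 0 < ((b:ℂ) + u * z).re := by
        simp only [Complex.add_re, Complex.ofReal_re, Complex.mul_re, Complex.ofReal_im,
          zero_mul, sub_zero]
        nlinarith [mul_nonneg hu.1 hz]
      rw [h] at hre; simp at hre
  have hii : IntervalIntegrable (fun u : ℝ => -(z / ((b:ℂ) + u * z))) volume 0 1 :=
    (hcont'.mono (by rw [huIcc])).intervalIntegrable
  have hφeq := intervalIntegral.integral_eq_sub_of_hasDerivAt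
    (f := φ) (f' := fun u => -(z / ((b:ℂ) + u * z)))
    (fun u hu => hφder u (huIcc ▸ hu)) hii
  have hψeq := intervalIntegral.integral_eq_sub_of_hasDerivAt
    (f := ψ) (f' := fun u => -(z / ((b:ℂ) + u * z)))
    (fun u hu => hψder u (huIcc ▸ hu)) hii
  have hφ0 : φ 0 = 0 := by
    rw [hφ]
    simp only [hF, Complex.ofReal_zero, zero_mul, neg_zero, Complex.exp_zero, sub_self,
      smul_zero]
    simp
  have hψ0 : ψ 0 = 0 := by simp [hψ]
  have hkey : φ 1 = ψ 1 := by
    have := hφeq.symm.trans hψeq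
    rw [hφ0, hψ0] at this
    simpa using this
  have hLHS : (∫ s in Set.Ioi (0:ℝ), ((1:ℝ) * s⁻¹ * Real.exp (-(b * s))) •
      (Complex.exp (-(z * s)) - 1)) = φ 1 := by
    rw [hφ]
    congr 1
    funext s
    rw [hF]
    norm_num
  rw [hLHS, hkey, hψ]
  norm_num

lemma frullani_smul (aa b : ℝ) (hb : 0 < b) (z : ℂ) (hz : 0 ≤ z.re) :
    ∫ s in Set.Ioi (0:ℝ), (aa * s⁻¹ * Real.exp (-(b * s))) • (Complex.exp (-(z * s)) - 1)
      = -(aa:ℂ) * Complex.log (1 + z / b) := by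
  have h0 : ∀ s : ℝ, (aa * s⁻¹ * Real.exp (-(b * s))) • (Complex.exp (-(z * s)) - 1)
      = aa • (((1:ℝ) * s⁻¹ * Real.exp (-(b * s))) • (Complex.exp (-(z * s)) - 1)) := by
    intro s; rw [smul_smul]; ring_nf
  simp_rw [h0]
  rw [integral_smul, frullani_core b hb z hz]
  have hne : (1 : ℂ) + z / b ≠ 0 := by
    intro h
    have h2 : ((1:ℂ) + z / b).re = 0 := by rw [h]; simp
    rw [Complex.add_re, Complex.one_re, Complex.div_ofReal_re] at h2
    nlinarith [div_nonneg hz hb.le]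
  have hlog : Complex.log ((b:ℂ) + z) = Real.log b + Complex.log (1 + z / b) := by
    have hbz : (b:ℂ) + z = (b:ℝ) * (1 + z / b) := by
      have : ((b:ℝ):ℂ) ≠ 0 := Complex.ofReal_ne_zero.mpr hb.ne'
      field_simp
    rw [hbz, Complex.log_ofReal_mul hb hne]
  rw [hlog, ← Complex.ofReal_log hb.le, Complex.real_smul]
  ring

lemma quad_diaM_nonneg {n : ℕ} (α : Fin n → ℝ) (hα : ∀ k, 0 < α k)
    (S : Matrix (Fin n) (Fin n) ℝ) (hS : S.PosSemidef) (θ : Fin n → ℝ) :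
    0 ≤ quad (diaM α S) θ := by
  classical
  set v : ℝ → Fin n → ℝ :=
    fun x k => θ k * Set.indicator (Set.Ioc 0 (α k)) (fun _ => (1:ℝ)) x with hv
  have hind_int : ∀ c : ℝ, Integrable
      (Set.indicator (Set.Ioc (0:ℝ) c) (fun _ => (1:ℝ))) (volume.restrict (Set.Ioi 0)) := by
    intro c
    rw [integrable_indicator_iff measurableSet_Ioc]
    refine integrableOn_const ?_
    exact (lt_of_le_of_lt (Measure.restrict_apply_le _ _) measure_Ioc_lt_top).ne
  have hprod : ∀ (k l : Fin n) (x : ℝ), v x k * S k l * v x l =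
      (θ k * S k l * θ l) * Set.indicator (Set.Ioc 0 (min (α k) (α l))) (fun _ => (1:ℝ)) x := by
    intro k l x
    have hset : Set.Ioc (0:ℝ) (min (α k) (α l)) = Set.Ioc 0 (α k) ∩ Set.Ioc 0 (α l) := by
      rw [Set.Ioc_inter_Ioc, max_self]
    have hmul : Set.indicator (Set.Ioc 0 (α k)) (fun _ => (1:ℝ)) x *
        Set.indicator (Set.Ioc 0 (α l)) (fun _ => (1:ℝ)) x =
        Set.indicator (Set.Ioc 0 (min (α k) (α l))) (fun _ => (1:ℝ)) x := by
      rw [hset, ← Set.inter_indicator_mul]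
      simp
    rw [hv]
    dsimp only
    rw [← hmul]
    ring
  have hterm_int : ∀ k l : Fin n, Integrable (fun x => v x k * S k l * v x l)
      (volume.restrict (Set.Ioi 0)) := by
    intro k l
    refine Integrable.congr ((hind_int (min (α k) (α l))).const_mul (θ k * S k l * θ l)) ?_
    exact ae_of_all _ fun x => (hprod k l x).symm
  have hmin_int : ∀ k l : Fin n, (∫ x in Set.Ioi (0:ℝ),
      Set.indicator (Set.Ioc 0 (min (α k) (α l))) (fun _ => (1:ℝ)) x) = min (α k) (α l) := by
    intro k l
    rw [integral_indicator_const (1:ℝ) measurableSet_Ioc, measureReal_restrict_apply measurableSet_Ioc,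
      Set.inter_eq_self_of_subset_left Set.Ioc_subset_Ioi_self, measureReal_def, Real.volume_Ioc, sub_zero,
      ENNReal.toReal_ofReal (le_of_lt (lt_min (hα k) (hα l))), smul_eq_mul, mul_one]
  have key : quad (diaM α S) θ = ∫ x in Set.Ioi (0:ℝ), ∑ k, ∑ l, v x k * S k l * v x l := by
    calc quad (diaM α S) θ = ∑ k, ∑ l, θ k * (S k l * min (α k) (α l)) * θ l := rfl
      _ = ∑ k, ∑ l, ∫ x in Set.Ioi (0:ℝ), v x k * S k l * v x l := by
          refine Finset.sum_congr rfl fun k _ => Finset.sum_congr rfl fun l _ => ?_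
          simp_rw [hprod k l]
          rw [MeasureTheory.integral_const_mul, hmin_int k l]
          ring
      _ = ∫ x in Set.Ioi (0:ℝ), ∑ k, ∑ l, v x k * S k l * v x l := by
          rw [MeasureTheory.integral_finset_sum _
            (fun k _ => integrable_finset_sum _ (fun l _ => hterm_int k l))]
          exact Finset.sum_congr rfl fun k _ =>
            (MeasureTheory.integral_finset_sum _ (fun l _ => hterm_int k l)).symm
  rw [key]
  apply MeasureTheory.integral_nonneg
  intro x
  have h := hS.dotProduct_mulVec_nonneg (v x)
  have heq : dotProduct (star (v x)) (S.mulVec (v x)) =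
      ∑ k, ∑ l, v x k * S k l * v x l := by
    simp [dotProduct, Matrix.mulVec, Finset.mul_sum, mul_assoc]
  rw [heq] at h
  exact h

lemma piece {n : ℕ} (f : (Fin n → ℝ) → ℂ) (hfc : Continuous f)
    (g : ℝ → (Fin n → ℝ)) (hg : Measurable g) (aa bb : ℝ) (haa : 0 ≤ aa) (hbb : 0 < bb)
    (z : ℂ) (hz : 0 ≤ z.re)
    (hcomp : ∀ s : ℝ, 0 < s → f (g s) = Complex.exp (-(z * s)) - 1) :
    Integrable f (Measure.map g (gammaLevyMeasure aa bb)) ∧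
    ∫ t, f t ∂(Measure.map g (gammaLevyMeasure aa bb))
      = -(aa:ℂ) * Complex.log (1 + z / bb) := by
  have hdensm : Measurable (fun s : ℝ => (aa * s⁻¹ * Real.exp (-(bb * s))).toNNReal) :=
    measurable_real_toNNReal.comp (((measurable_const.mul measurable_inv).mul
      ((Real.measurable_exp.comp ((measurable_const.mul measurable_id).neg)))))
  have hwd : gammaLevyMeasure aa bb = (volume.restrict (Set.Ioi (0:ℝ))).withDensity
      (fun s => (((aa * s⁻¹ * Real.exp (-(bb * s))).toNNReal : ℝ≥0) : ℝ≥0∞)) := rfl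
  have hae : ∀ᵐ s ∂(volume.restrict (Set.Ioi (0:ℝ))),
      ((aa * s⁻¹ * Real.exp (-(bb * s))).toNNReal : ℝ≥0) • f (g s)
        = (aa * s⁻¹ * Real.exp (-(bb * s))) • (Complex.exp (-(z * s)) - 1) := by
    filter_upwards [ae_restrict_mem measurableSet_Ioi] with s hs
    have hs0 : (0:ℝ) < s := hs
    have hnn : 0 ≤ aa * s⁻¹ * Real.exp (-(bb * s)) := by positivity
    rw [NNReal.smul_def, Real.coe_toNNReal _ hnn, hcomp s hs0]
  constructor
  · rw [integrable_map_measure hfc.aestronglyMeasurable hg.aemeasurable, hwd,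
      integrable_withDensity_iff_integrable_smul hdensm]
    exact (frullani_integrable aa bb hbb z hz).congr (hae.mono fun s h => h.symm)
  · rw [integral_map hg.aemeasurable hfc.aestronglyMeasurable, hwd,
      integral_withDensity_eq_integral_smul hdensm, integral_congr_ae hae,
      frullani_smul aa bb hbb z hz]

/-- The Lévy exponent of the weak subordination of `BM^n(μ,Σ)` with the alpha-gamma
subordinator `AG_S^n(a,α)` equals the Lévy exponent of `WVAG^n(a,α,μ,Σ)`. -/
theorem stmt5 {n : ℕ} (hn : 2 ≤ n) (a : ℝ) (ha : 0 < a) (α : Fin n → ℝ)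
    (hα : ∀ k, 0 < α k) (hsmall : ∀ k, a * α k < 1) (μ : Fin n → ℝ)
    (S : Matrix (Fin n) (Fin n) ℝ) (hS : S.PosSemidef) (θ : Fin n → ℝ) :
    ∫ t, (Complex.exp (Complex.I * (dot θ (diaV t μ) : ℂ) -
        (quad (diaM t S) θ : ℂ) / 2) - 1) ∂(agLevyMeasure a α) =
      Ψwvag a α μ S θ := by
  classical
  set C : ℝ := dot (diaV α μ) θ with hC
  set Q : ℝ := quad (diaM α S) θ with hQ
  have hQ0 : 0 ≤ Q := quad_diaM_nonneg α hα S hS θ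
  have hdiag : ∀ k, 0 ≤ S k k := by
    intro k
    have h := hS.dotProduct_mulVec_nonneg (Pi.single k 1)
    have heq : dotProduct (star (Pi.single k 1)) (S.mulVec (Pi.single k 1)) = S k k := by
      simp [dotProduct, Matrix.mulVec, Pi.single_apply, mul_ite, ite_mul,
        Finset.sum_ite_eq', Finset.mul_sum]
    rw [heq] at h
    exact h
  set f : (Fin n → ℝ) → ℂ := fun t => Complex.exp (Complex.I * (dot θ (diaV t μ) : ℂ) -
      (quad (diaM t S) θ : ℂ) / 2) - 1 with hf
  have hfc : Continuous f := by
    apply Continuous.sub _ continuous_const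
    apply Complex.continuous_exp.comp
    apply Continuous.sub
    · apply continuous_const.mul
      apply Complex.continuous_ofReal.comp
      simp only [dot, diaV]
      exact continuous_finset_sum _ fun k _ =>
        continuous_const.mul ((continuous_apply k).mul continuous_const)
    · apply Continuous.div_const
      apply Complex.continuous_ofReal.comp
      simp only [quad, diaM, Matrix.of_apply]
      exact continuous_finset_sum _ fun k _ => continuous_finset_sum _ fun l _ =>
        (continuous_const.mul (continuous_const.mul
          ((continuous_apply k).min (continuous_apply l)))).mul continuous_const
  set z₀ : ℂ := ((Q/2 : ℝ) : ℂ) - Complex.I * (C : ℂ) with hz₀def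
  have hz₀ : 0 ≤ z₀.re := by
    rw [hz₀def]
    simp only [Complex.sub_re, Complex.ofReal_re, Complex.mul_re, Complex.I_re, Complex.I_im,
      Complex.ofReal_im, zero_mul, one_mul, mul_zero, sub_zero]
    linarith
  set zk : Fin n → ℂ := fun k => ((θ k ^ 2 * S k k / 2 : ℝ) : ℂ) -
    Complex.I * ((μ k * θ k : ℝ) : ℂ) with hzkdef
  have hzk : ∀ k, 0 ≤ (zk k).re := by
    intro k
    rw [hzkdef]
    simp only [Complex.sub_re, Complex.ofReal_re, Complex.mul_re, Complex.I_re, Complex.I_im,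
      Complex.ofReal_im, zero_mul, one_mul, mul_zero, sub_zero]
    nlinarith [hdiag k, sq_nonneg (θ k)]
  -- compositions
  have hcomp0 : ∀ s : ℝ, 0 < s → f (s • α) = Complex.exp (-(z₀ * s)) - 1 := by
    intro s hs
    have h1 : dot θ (diaV (s • α) μ) = C * s := by
      rw [hC]
      simp only [dot, diaV, Pi.smul_apply, smul_eq_mul, Finset.sum_mul]
      exact Finset.sum_congr rfl fun k _ => by ring
    have h2 : quad (diaM (s • α) S) θ = Q * s := by
      rw [hQ]
      simp only [quad, diaM, Matrix.of_apply, Pi.smul_apply, smul_eq_mul, Finset.sum_mul]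
      refine Finset.sum_congr rfl fun k _ => ?_
      refine Finset.sum_congr rfl fun l _ => ?_
      rw [← mul_min_of_nonneg _ _ hs.le]
      ring
    rw [show f (s • α) = Complex.exp (Complex.I * ((dot θ (diaV (s • α) μ) : ℝ) : ℂ) -
        ((quad (diaM (s • α) S) θ : ℝ) : ℂ) / 2) - 1 from rfl, h1, h2]
    congr 1
    rw [hz₀def]
    push_cast
    ring
  have hsingle_nonneg : ∀ (k : Fin n) (s : ℝ), 0 < s → ∀ m, 0 ≤ (Pi.single k s : Fin n → ℝ) m := by
    intro k s hs m
    rcases eq_or_ne m k with rfl | h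
    · rw [Pi.single_eq_same]; exact hs.le
    · rw [Pi.single_eq_of_ne h]
  have hcompk : ∀ (k : Fin n) (s : ℝ), 0 < s →
      f (Pi.single k s) = Complex.exp (-(zk k * s)) - 1 := by
    intro k s hs
    have h1 : dot θ (diaV (Pi.single k s) μ) = μ k * θ k * s := by
      simp only [dot, diaV]
      rw [Finset.sum_eq_single k]
      · rw [Pi.single_eq_same]; ring
      · intro l _ hlk; rw [Pi.single_eq_of_ne hlk]; ring
      · intro h; exact absurd (Finset.mem_univ k) h
    have h2 : quad (diaM (Pi.single k s) S) θ = θ k ^ 2 * S k k * s := by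
      simp only [quad, diaM, Matrix.of_apply]
      rw [Finset.sum_eq_single k]
      · rw [Finset.sum_eq_single k]
        · rw [Pi.single_eq_same, min_self]; ring
        · intro l _ hlk
          rw [Pi.single_eq_of_ne hlk, Pi.single_eq_same, min_eq_right hs.le]
          ring
        · intro h; exact absurd (Finset.mem_univ k) h
      · intro l _ hlk
        apply Finset.sum_eq_zero
        intro m _
        rw [Pi.single_eq_of_ne hlk, min_eq_left (hsingle_nonneg k s hs m)]
        ring
      · intro h; exact absurd (Finset.mem_univ k) h
    rw [show f (Pi.single k s) = Complex.exp (Complex.I *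
        ((dot θ (diaV (Pi.single k s) μ) : ℝ) : ℂ) -
        ((quad (diaM (Pi.single k s) S) θ : ℝ) : ℂ) / 2) - 1 from rfl, h1, h2]
    congr 1
    rw [hzkdef]
    push_cast
    ring
  -- measurability of the maps
  have hmap0 : Measurable (fun s : ℝ => s • α) := (continuous_id.smul continuous_const).measurable
  have hmapk : ∀ k : Fin n, Measurable (fun s : ℝ => (Pi.single k s : Fin n → ℝ)) := by
    intro k
    apply Continuous.measurable
    apply continuous_pi
    intro l
    simp only [Pi.single_apply]
    split_ifs
    · exact continuous_id
    · exact continuous_const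
  -- the three pieces
  have hβ : ∀ k, 0 ≤ (1 - a * α k) / α k := fun k =>
    div_nonneg (by linarith [hsmall k]) (hα k).le
  have hpiece0 := piece f hfc _ hmap0 a 1 ha.le one_pos z₀ hz₀ hcomp0
  have hpiecek : ∀ k : Fin n,
      Integrable f (Measure.map (fun s : ℝ => (Pi.single k s : Fin n → ℝ))
        (gammaLevyMeasure ((1 - a * α k) / α k) (1 / α k))) ∧
      ∫ t, f t ∂(Measure.map (fun s : ℝ => (Pi.single k s : Fin n → ℝ))
        (gammaLevyMeasure ((1 - a * α k) / α k) (1 / α k)))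
        = -(((1 - a * α k) / α k : ℝ):ℂ) * Complex.log (1 + zk k / ((1 / α k : ℝ):ℂ)) :=
    fun k => piece f hfc _ (hmapk k) ((1 - a * α k) / α k) (1 / α k) (hβ k)
      (one_div_pos.mpr (hα k)) (zk k) (hzk k) (hcompk k)
  show ∫ t, f t ∂(agLevyMeasure a α) = Ψwvag a α μ S θ
  unfold agLevyMeasure
  rw [integral_add_measure hpiece0.1 (integrable_finset_sum_measure.2 fun k _ => (hpiecek k).1),
    integral_finset_sum_measure (fun k _ => (hpiecek k).1), hpiece0.2]
  have harg0 : (1 : ℂ) + z₀ / (((1:ℝ)):ℂ) = 1 - Complex.I * (C : ℂ) + (Q : ℂ)/2 := by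
    rw [hz₀def]; push_cast; ring
  have hargk : ∀ k : Fin n, (1:ℂ) + zk k / ((1 / α k : ℝ):ℂ) =
      1 - Complex.I * ((α k * μ k * θ k : ℝ) : ℂ) + ((α k * θ k ^ 2 * S k k : ℝ) : ℂ)/2 := by
    intro k
    have hαC : ((α k : ℝ):ℂ) ≠ 0 := Complex.ofReal_ne_zero.mpr (hα k).ne'
    rw [hzkdef]
    push_cast
    field_simp
    ring
  rw [harg0]
  rw [Finset.sum_congr rfl fun k _ => by rw [(hpiecek k).2, hargk k]]
  unfold Ψwvag
  rw [← hC, ← hQ]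
  simp only [neg_mul, sub_eq_add_neg, ← Finset.sum_neg_distrib]
end
end

section
/- Let n ≥ 2, a > 0, and α = (α_1,…,α_n) ∈ (0,∞)^n with a α_k < 1 for all k; set β_k := (1 − a α_k)/α_k. Let μ ∈ ℝ^n, let Σ ∈ ℝ^{n×n} be a symmetric positive semidefinite matrix, and let Ψ(θ) = −a Log(1 − i⟨α⋄μ, θ⟩ + ½‖θ‖²_{α⋄Σ}) − Σ_{k=1}^n β_k Log(1 − i α_k μ_k θ_k + ½ α_k θ_k² Σ_{kk}). Let P be a probability measure on ℝ^n with finite second moments (∫ ‖x‖² P(dx) < ∞) whose characteristic function satisfies ∫ exp(i⟨θ,x⟩) P(dx) = exp(Ψ(θ)) for all θ ∈ ℝ^n. Then for all 1 ≤ k ≠ l ≤ n, ∫ x_k x_l P(dx) − (∫ x_k P(dx))(∫ x_l P(dx)) = a min(α_k, α_l) Σ_{kl} + a α_k α_l μ_k μ_l. -/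
open MeasureTheory Complex
open Filter

noncomputable section

def auxw (c e t : ℝ) : ℂ := 1 - Complex.I*c*t + e*t^2/2

lemma auxw_hasDerivAt (c e : ℝ) (t : ℝ) :
    HasDerivAt (fun s : ℝ => auxw c e s) (-(I*c) + e*t) t := by
  have h : HasDerivAt (fun z : ℂ => (1:ℂ) - I*c*z + e*z^2/2) (-(I*c) + e*t) (t:ℂ) := by
    have h1 : HasDerivAt (fun z : ℂ => z) 1 (t:ℂ) := hasDerivAt_id _
    have h2 := ((hasDerivAt_pow 2 (t:ℂ)).const_mul (e:ℂ)).div_const 2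
    have h3 := ((h1.const_mul (I*(c:ℂ))).const_sub 1).add h2
    refine HasDerivAt.congr_deriv h3 ?_
    push_cast; ring
  exact h.comp_ofReal

lemma auxw_zero (c e : ℝ) : auxw c e 0 = 1 := by
  unfold auxw; push_cast; ring

lemma aux_ev_slit (c e : ℝ) : ∀ᶠ t : ℝ in nhds 0, auxw c e t ∈ slitPlane := by
  have hc : ContinuousAt (fun s : ℝ => auxw c e s) 0 := (auxw_hasDerivAt c e 0).continuousAt
  have h0 : auxw c e 0 ∈ slitPlane := by rw [auxw_zero]; exact one_mem_slitPlane
  exact hc.eventually_mem (isOpen_slitPlane.mem_nhds h0)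

lemma aux_log_deriv (c e : ℝ) {t : ℝ} (h : auxw c e t ∈ slitPlane) :
    HasDerivAt (fun s : ℝ => Complex.log (auxw c e s))
      ((-(I*c) + e*t) / auxw c e t) t :=
  (auxw_hasDerivAt c e t).clog_real h

lemma aux_ratio_deriv (c e : ℝ) :
    HasDerivAt (fun t : ℝ => (-(I*(c:ℂ)) + (e:ℂ)*t) / auxw c e t) ((e:ℂ) + (c:ℂ)^2) 0 := by
  have hnum : HasDerivAt (fun t : ℝ => -(I*(c:ℂ)) + (e:ℂ)*t) (e:ℂ) 0 := by
    simpa using (((hasDerivAt_id (0:ℝ)).ofReal_comp).const_mul (e:ℂ)).const_add (-(I*(c:ℂ)))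
  have hden := auxw_hasDerivAt c e 0
  have h0 : auxw c e 0 ≠ 0 := by rw [auxw_zero]; exact one_ne_zero
  have h := hnum.div hden h0
  have hval : (↑e * auxw c e 0 - (-(I * ↑c) + ↑e * ((0:ℝ):ℂ)) * (-(I * ↑c) + ↑e * ((0:ℝ):ℂ))) /
      auxw c e 0 ^ 2 = (e:ℂ) + (c:ℂ)^2 := by
    rw [auxw_zero]
    push_cast
    ring_nf
    simp [Complex.I_sq]
  rw [hval] at h
  exact h

lemma dot_smul_left {n : ℕ} (v x : Fin n → ℝ) (t : ℝ) : dot (t • v) x = t * dot v x := by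
  unfold dot; rw [Finset.mul_sum]; exact Finset.sum_congr rfl fun k _ => by
    simp [Pi.smul_apply, smul_eq_mul]; ring

lemma dot_smul_right {n : ℕ} (u v : Fin n → ℝ) (t : ℝ) : dot u (t • v) = t * dot u v := by
  unfold dot; rw [Finset.mul_sum]; exact Finset.sum_congr rfl fun k _ => by
    simp [Pi.smul_apply, smul_eq_mul]; ring

lemma quad_smul {n : ℕ} (A : Matrix (Fin n) (Fin n) ℝ) (v : Fin n → ℝ) (t : ℝ) :
    quad A (t • v) = t^2 * quad A v := by
  unfold quad; rw [Finset.mul_sum]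
  refine Finset.sum_congr rfl fun k _ => ?_
  rw [Finset.mul_sum]
  exact Finset.sum_congr rfl fun l _ => by simp [Pi.smul_apply, smul_eq_mul]; ring
lemma aux_exp_deriv (y : ℝ) (t : ℝ) :
    HasDerivAt (fun s : ℝ => Complex.exp (I*s*y)) (I*y*Complex.exp (I*t*y)) t := by
  have h1 : HasDerivAt (fun z : ℂ => I*z*y) (I*y) (t:ℂ) := by
    simpa using ((hasDerivAt_id (t:ℂ)).const_mul I).mul_const (y:ℂ)
  have h2 := h1.cexp
  rw [mul_comm] at h2
  exact h2.comp_ofReal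

lemma aux_norm_exp (s y : ℝ) : ‖Complex.exp (I*s*y)‖ = 1 := by
  rw [Complex.norm_exp]
  simp [Complex.mul_re]

section charderiv
variable {Ω : Type*} [MeasurableSpace Ω] {P : Measure Ω} [IsProbabilityMeasure P]

lemma aux_asm1 {Y : Ω → ℝ} (hYm : Measurable Y) (s : ℝ) :
    AEStronglyMeasurable (fun x => Complex.exp (I*s*(Y x))) P :=
  (Complex.measurable_exp.comp ((Complex.measurable_ofReal.comp hYm).const_mul
    (I*s))).aestronglyMeasurable

lemma aux_asm2 {Y : Ω → ℝ} (hYm : Measurable Y) (s : ℝ) :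
    AEStronglyMeasurable (fun x => I*(Y x)*Complex.exp (I*s*(Y x))) P :=
  (((Complex.measurable_ofReal.comp hYm).const_mul I).mul
    (Complex.measurable_exp.comp ((Complex.measurable_ofReal.comp hYm).const_mul
      (I*s)))).aestronglyMeasurable

lemma aux_char_deriv1 {Y : Ω → ℝ} (hYm : Measurable Y) (hY : MemLp Y 2 P) (t : ℝ) :
    HasDerivAt (fun s : ℝ => ∫ x, Complex.exp (I*s*(Y x)) ∂P)
      (∫ x, I*(Y x)*Complex.exp (I*t*(Y x)) ∂P) t := by
  have hint : Integrable Y P := hY.integrable one_le_two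
  refine (hasDerivAt_integral_of_dominated_loc_of_deriv_le
    (F := fun (s : ℝ) x => Complex.exp (I*s*(Y x)))
    (F' := fun (s : ℝ) x => I*(Y x)*Complex.exp (I*s*(Y x))) (bound := fun x => |Y x|)
    (Metric.ball_mem_nhds t one_pos) (Eventually.of_forall (aux_asm1 hYm)) ?_ (aux_asm2 hYm t) ?_ ?_ ?_).2
  · exact (integrable_const (1:ℝ)).mono' (aux_asm1 hYm t)
      (Eventually.of_forall fun x => by rw [aux_norm_exp])
  · refine Eventually.of_forall fun x => fun s _ => ?_
    rw [norm_mul, aux_norm_exp, norm_mul]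
    simp
  · exact hint.abs
  · exact Eventually.of_forall fun x => fun s _ => aux_exp_deriv (Y x) s

lemma aux_char_deriv2 {Y : Ω → ℝ} (hYm : Measurable Y) (hY : MemLp Y 2 P) (t : ℝ) :
    HasDerivAt (fun s : ℝ => ∫ x, I*(Y x)*Complex.exp (I*s*(Y x)) ∂P)
      (∫ x, (I*(Y x))^2*Complex.exp (I*t*(Y x)) ∂P) t := by
  have hint : Integrable Y P := hY.integrable one_le_two
  have hsq : Integrable (fun x => (Y x)^2) P :=
    (memLp_two_iff_integrable_sq hY.aestronglyMeasurable).1 hY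
  have hasm' : ∀ s : ℝ, AEStronglyMeasurable (fun x => (I*(Y x))^2*Complex.exp (I*s*(Y x))) P := by
    intro s
    exact ((((Complex.measurable_ofReal.comp hYm).const_mul I).pow_const 2).mul
      (Complex.measurable_exp.comp ((Complex.measurable_ofReal.comp hYm).const_mul
        (I*s)))).aestronglyMeasurable
  refine (hasDerivAt_integral_of_dominated_loc_of_deriv_le
    (F := fun (s : ℝ) x => I*(Y x)*Complex.exp (I*s*(Y x)))
    (F' := fun (s : ℝ) x => (I*(Y x))^2*Complex.exp (I*s*(Y x))) (bound := fun x => (Y x)^2)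
    (Metric.ball_mem_nhds t one_pos) (Eventually.of_forall (aux_asm2 hYm)) ?_ (hasm' t) ?_ ?_ ?_).2
  · refine hint.abs.mono' (aux_asm2 hYm t) (Eventually.of_forall fun x => ?_)
    rw [norm_mul, aux_norm_exp, norm_mul]
    simp
  · refine Eventually.of_forall fun x => fun s _ => ?_
    rw [norm_mul, aux_norm_exp, norm_pow, norm_mul]
    simp [sq_abs]
  · exact hsq
  · refine Eventually.of_forall fun x => fun s _ => ?_
    have h := (aux_exp_deriv (Y x) s).const_mul (I*(Y x))
    refine h.congr_deriv ?_
    ring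

end charderiv

lemma aux_integral_ofReal {Ω : Type*} [MeasurableSpace Ω] (P : Measure Ω) (f : Ω → ℝ) :
    ∫ x, ((f x : ℝ) : ℂ) ∂P = ((∫ x, f x ∂P : ℝ) : ℂ) := integral_ofReal

lemma wvag_var {n : ℕ} (a : ℝ) (α μ : Fin n → ℝ) (S : Matrix (Fin n) (Fin n) ℝ)
    (P : Measure (Fin n → ℝ)) [IsProbabilityMeasure P]
    (h2 : ∀ k, MemLp (fun x => x k) 2 P)
    (hchar : ∀ θ : Fin n → ℝ,
      ∫ x, Complex.exp (Complex.I * (dot θ x : ℂ)) ∂P = Complex.exp (Ψwvag a α μ S θ))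
    (v : Fin n → ℝ) :
    (∫ x, (dot v x)^2 ∂P) - (∫ x, dot v x ∂P)^2
      = a * (quad (diaM α S) v + (dot (diaV α μ) v)^2)
        + ∑ j, (1 - a * α j)/α j * (α j * v j^2 * S j j + (α j * μ j * v j)^2) := by
  set C := dot (diaV α μ) v with hC
  set Q := quad (diaM α S) v with hQ
  set d : Fin n → ℝ := fun j => α j * μ j * v j with hd
  set e : Fin n → ℝ := fun j => α j * v j^2 * S j j with he
  set β : Fin n → ℝ := fun j => (1 - a * α j)/α j with hβ
  set Y : (Fin n → ℝ) → ℝ := fun x => dot v x with hY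
  have hYm : Measurable Y := by
    rw [hY]; unfold dot
    exact Finset.measurable_sum _ fun k _ => by fun_prop
  have hYL2 : MemLp Y 2 P := by
    rw [hY]; unfold dot
    exact memLp_finset_sum _ fun k _ => (h2 k).const_mul (v k)
  set M1 := ∫ x, Y x ∂P with hM1d
  set M2 := ∫ x, (Y x)^2 ∂P with hM2d
  -- the characteristic function along direction v
  set φ : ℝ → ℂ := fun t => ∫ x, Complex.exp (I*t*(Y x)) ∂P with hφd
  set ψ : ℝ → ℂ := fun t => ∫ x, I*(Y x)*Complex.exp (I*t*(Y x)) ∂P with hψd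
  have hφ : ∀ t, HasDerivAt φ (ψ t) t := fun t => aux_char_deriv1 hYm hYL2 t
  have hψ0 : HasDerivAt ψ (-(M2:ℂ)) 0 := by
    have h := aux_char_deriv2 hYm hYL2 0
    have hval : (∫ x, (I*(Y x))^2*Complex.exp (I*((0:ℝ):ℂ)*(Y x)) ∂P) = -(M2:ℂ) := by
      have hpt : ∀ x, (I*((Y x:ℝ):ℂ))^2*Complex.exp (I*((0:ℝ):ℂ)*(Y x))
          = -((((Y x)^2 : ℝ)):ℂ) := by
        intro x; push_cast; simp [mul_pow, Complex.I_sq]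
      rw [integral_congr_ae (Eventually.of_forall hpt), integral_neg,
        aux_integral_ofReal P (fun x => (Y x)^2), hM2d]
    rw [hval] at h
    exact h
  -- explicit form of Ψ along direction v
  set Ψv : ℝ → ℂ := fun t => -(a:ℂ)*Complex.log (auxw C Q t)
      - ∑ j, ((β j:ℝ):ℂ)*Complex.log (auxw (d j) (e j) t) with hΨvd
  have hpsi : ∀ t : ℝ, Ψwvag a α μ S (t • v) = Ψv t := by
    intro t
    have h1 : (1 - Complex.I * (dot (diaV α μ) (t • v) : ℂ) +
        (quad (diaM α S) (t • v) : ℂ) / 2) = auxw C Q t := by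
      rw [dot_smul_right, quad_smul, auxw]
      push_cast; ring
    unfold Ψwvag
    rw [h1, hΨvd]
    congr 1
    refine Finset.sum_congr rfl fun j _ => ?_
    congr 2
    have : (t • v) j = t * v j := rfl
    rw [this, auxw, hd, he]
    push_cast; ring
  have hφg : ∀ t, φ t = Complex.exp (Ψv t) := by
    intro t
    have h := hchar (t • v)
    rw [hpsi t] at h
    rw [← h, hφd]
    refine integral_congr_ae (Eventually.of_forall fun x => ?_)
    show Complex.exp (I*(t:ℂ)*((Y x:ℝ):ℂ)) = Complex.exp (I*((dot (t • v) x : ℝ):ℂ))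
    rw [dot_smul_left, hY]
    push_cast
    ring_nf
  -- derivative of the explicit side
  set Φ : ℝ → ℂ := fun t => -(a:ℂ)*((-(I*(C:ℂ)) + (Q:ℂ)*t)/auxw C Q t)
      - ∑ j, ((β j:ℝ):ℂ)*((-(I*((d j:ℝ):ℂ)) + ((e j:ℝ):ℂ)*t)/auxw (d j) (e j) t) with hΦd
  have hΨderiv : ∀ t : ℝ, (auxw C Q t ∈ slitPlane ∧ ∀ j, auxw (d j) (e j) t ∈ slitPlane) →
      HasDerivAt Ψv (Φ t) t := by
    intro t ht
    exact ((aux_log_deriv C Q ht.1).const_mul (-(a:ℂ))).sub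
      (HasDerivAt.fun_sum fun j _ => (aux_log_deriv (d j) (e j) (ht.2 j)).const_mul ((β j:ℝ):ℂ))
  have hslit : ∀ᶠ t : ℝ in nhds 0,
      auxw C Q t ∈ slitPlane ∧ ∀ j, auxw (d j) (e j) t ∈ slitPlane :=
    (aux_ev_slit C Q).and (eventually_all.2 fun j => aux_ev_slit (d j) (e j))
  have hslit0 : auxw C Q 0 ∈ slitPlane ∧ ∀ j, auxw (d j) (e j) 0 ∈ slitPlane := by
    constructor
    · rw [auxw_zero]; exact one_mem_slitPlane
    · intro j; rw [auxw_zero]; exact one_mem_slitPlane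
  set DΦ : ℂ := -(a:ℂ)*((Q:ℂ) + (C:ℂ)^2) - ∑ j, ((β j:ℝ):ℂ)*(((e j:ℝ):ℂ) + ((d j:ℝ):ℂ)^2)
    with hDΦd
  have hΦderiv : HasDerivAt Φ DΦ 0 :=
    ((aux_ratio_deriv C Q).const_mul (-(a:ℂ))).sub
      (HasDerivAt.fun_sum fun j _ => (aux_ratio_deriv (d j) (e j)).const_mul ((β j:ℝ):ℂ))
  have hE : HasDerivAt (fun t => Complex.exp (Ψv t) * Φ t)
      ((Complex.exp (Ψv 0)*Φ 0)*Φ 0 + Complex.exp (Ψv 0)*DΦ) 0 :=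
    ((hΨderiv 0 hslit0).cexp).mul hΦderiv
  have heq : ψ =ᶠ[nhds (0:ℝ)] fun t => Complex.exp (Ψv t) * Φ t := by
    filter_upwards [hslit] with t ht
    have h1 : HasDerivAt φ (Complex.exp (Ψv t) * Φ t) t :=
      ((hΨderiv t ht).cexp).congr_of_eventuallyEq (Eventually.of_forall hφg)
    exact (hφ t).unique h1
  have hψ0E : HasDerivAt ψ ((Complex.exp (Ψv 0)*Φ 0)*Φ 0 + Complex.exp (Ψv 0)*DΦ) 0 :=
    hE.congr_of_eventuallyEq heq
  have hkey2 : -(M2:ℂ) = (Complex.exp (Ψv 0)*Φ 0)*Φ 0 + Complex.exp (Ψv 0)*DΦ :=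
    hψ0.unique hψ0E
  have hkey1 : ψ 0 = Complex.exp (Ψv 0) * Φ 0 := heq.self_of_nhds
  -- evaluate everything at 0
  have hΨv0 : Ψv 0 = 0 := by
    rw [hΨvd]
    simp [auxw_zero, Complex.log_one]
  have hψzero : ψ 0 = I*(M1:ℂ) := by
    rw [hψd, hM1d]
    simp only [Complex.ofReal_zero, mul_zero, zero_mul, Complex.exp_zero, mul_one]
    rw [integral_const_mul, aux_integral_ofReal P Y]
  have hsum : ∑ j, ((β j:ℝ):ℂ) * (-(I*((d j:ℝ):ℂ))) = -(I * ((∑ j, β j * d j : ℝ):ℂ)) := by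
    push_cast
    rw [Finset.mul_sum, ← Finset.sum_neg_distrib]
    exact Finset.sum_congr rfl fun j _ => by ring
  have hΦ0 : Φ 0 = I*((a*C + ∑ j, β j * d j : ℝ):ℂ) := by
    rw [hΦd]
    simp only [Complex.ofReal_zero, mul_zero, add_zero, auxw_zero, div_one]
    rw [hsum]
    push_cast
    ring
  have hDΦval : DΦ = -(((a*(Q + C^2) + ∑ j, β j*(e j + d j^2) : ℝ)):ℂ) := by
    rw [hDΦd]
    push_cast
    ring
  have hM1 : M1 = a*C + ∑ j, β j * d j := by
    have h := hkey1
    rw [hψzero, hΨv0, hΦ0, Complex.exp_zero, one_mul] at h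
    have := mul_left_cancel₀ Complex.I_ne_zero h
    exact_mod_cast this
  have hM2 : M2 = M1^2 + (a*(Q + C^2) + ∑ j, β j*(e j + d j^2)) := by
    have h := hkey2
    rw [hΨv0, hΦ0, hDΦval, Complex.exp_zero, one_mul, one_mul, ← hM1] at h
    have h2 : (M2:ℂ) = ((M1^2 + (a*(Q + C^2) + ∑ j, β j*(e j + d j^2)) : ℝ):ℂ) := by
      push_cast at h ⊢
      linear_combination -h - (M1:ℂ)^2 * Complex.I_sq
    exact_mod_cast h2
  -- conclude
  have hs : ∑ j, β j * (e j + d j^2)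
      = ∑ j, (1 - a * α j)/α j * (α j * v j^2 * S j j + (α j * μ j * v j)^2) :=
    Finset.sum_congr rfl fun j _ => by simp only [hβ, he, hd]
  rw [hM2, ← hs]
  ring

/-- Covariance of the components of the `WVAG^n(a,α,μ,Σ)` distribution: if `P` is a
probability measure with finite second moments and characteristic function `exp ∘ Ψ`,
then `Cov(X_k, X_l) = a min(αₖ,αₗ) Σₖₗ + a αₖ αₗ μₖ μₗ` for `k ≠ l`. -/
theorem stmt9 {n : ℕ} (hn : 2 ≤ n) (a : ℝ) (ha : 0 < a) (α : Fin n → ℝ)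
    (hα : ∀ k, 0 < α k) (hsmall : ∀ k, a * α k < 1) (μ : Fin n → ℝ)
    (S : Matrix (Fin n) (Fin n) ℝ) (hS : S.PosSemidef)
    (P : Measure (Fin n → ℝ)) [IsProbabilityMeasure P]
    (hmom : ∫⁻ x, ENNReal.ofReal (∑ k, x k ^ 2) ∂P < ⊤)
    (hchar : ∀ θ : Fin n → ℝ,
      ∫ x, Complex.exp (Complex.I * (dot θ x : ℂ)) ∂P = Complex.exp (Ψwvag a α μ S θ)) :
    ∀ k l : Fin n, k ≠ l →
      (∫ x, x k * x l ∂P) - (∫ x, x k ∂P) * (∫ x, x l ∂P) =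
        a * min (α k) (α l) * S k l + a * α k * α l * μ k * μ l := by
  have hsum_int : Integrable (fun x : Fin n → ℝ => ∑ j, x j ^ 2) P := by
    constructor
    · exact (Finset.measurable_sum _ fun j _ =>
        (measurable_pi_apply j).pow_const 2).aestronglyMeasurable
    · rw [hasFiniteIntegral_iff_ofReal
        (Filter.Eventually.of_forall fun x => Finset.sum_nonneg fun j _ => sq_nonneg _)]
      exact hmom
  have h2 : ∀ k, MemLp (fun x : Fin n → ℝ => x k) 2 P := by
    intro k
    refine (memLp_two_iff_integrable_sq
      ((measurable_pi_apply k).aestronglyMeasurable)).2 ?_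
    refine hsum_int.mono' ((measurable_pi_apply k).pow_const 2).aestronglyMeasurable
      (Filter.Eventually.of_forall fun x => ?_)
    rw [Real.norm_eq_abs, _root_.abs_of_nonneg (sq_nonneg (x k))]
    exact Finset.single_le_sum (f := fun j => x j ^ 2) (fun j _ => sq_nonneg _)
      (Finset.mem_univ k)
  intro k l hkl
  have Ik : Integrable (fun x : Fin n → ℝ => x k) P := (h2 k).integrable one_le_two
  have Il : Integrable (fun x : Fin n → ℝ => x l) P := (h2 l).integrable one_le_two
  have Ik2 : Integrable (fun x : Fin n → ℝ => x k ^ 2) P :=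
    (memLp_two_iff_integrable_sq ((measurable_pi_apply k).aestronglyMeasurable)).1 (h2 k)
  have Il2 : Integrable (fun x : Fin n → ℝ => x l ^ 2) P :=
    (memLp_two_iff_integrable_sq ((measurable_pi_apply l).aestronglyMeasurable)).1 (h2 l)
  have Ikl : Integrable (fun x : Fin n → ℝ => x k * x l) P := by
    refine hsum_int.mono'
      (((measurable_pi_apply k).mul (measurable_pi_apply l)).aestronglyMeasurable)
      (Filter.Eventually.of_forall fun x => ?_)
    have hb : x k ^ 2 + x l ^ 2 ≤ ∑ j, x j ^ 2 := by
      rw [(Finset.sum_pair (f := fun j => x j ^ 2) hkl).symm]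
      exact Finset.sum_le_sum_of_subset_of_nonneg (Finset.subset_univ _)
        fun j _ _ => sq_nonneg _
    have habs : |x k * x l| ≤ x k ^ 2 + x l ^ 2 := by
      rw [abs_mul]
      nlinarith [sq_nonneg (|x k| - |x l|), _root_.sq_abs (x k), _root_.sq_abs (x l),
        abs_nonneg (x k), abs_nonneg (x l)]
    rw [Real.norm_eq_abs]
    linarith
  set vk : Fin n → ℝ := fun j => if j = k then 1 else 0 with hvk
  set vl : Fin n → ℝ := fun j => if j = l then 1 else 0 with hvl
  set vkl : Fin n → ℝ := fun j => vk j + vl j with hvkl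
  have hdotk : ∀ x : Fin n → ℝ, dot vk x = x k := fun x => by
    simp [dot, hvk, ite_mul, Finset.sum_ite_eq']
  have hdotl : ∀ x : Fin n → ℝ, dot vl x = x l := fun x => by
    simp [dot, hvl, ite_mul, Finset.sum_ite_eq']
  have hdotkl : ∀ x : Fin n → ℝ, dot vkl x = x k + x l := fun x => by
    simp [dot, hvkl, hvk, hvl, add_mul, ite_mul, Finset.sum_add_distrib, Finset.sum_ite_eq']
  have hCk : dot (diaV α μ) vk = α k * μ k := by
    simp [dot, diaV, hvk, mul_ite, Finset.sum_ite_eq']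
  have hCl : dot (diaV α μ) vl = α l * μ l := by
    simp [dot, diaV, hvl, mul_ite, Finset.sum_ite_eq']
  have hCkl : dot (diaV α μ) vkl = α k * μ k + α l * μ l := by
    simp [dot, diaV, hvkl, hvk, hvl, mul_add, mul_ite, Finset.sum_add_distrib,
      Finset.sum_ite_eq']
  have hsym : S l k = S k l := by
    have h := congrFun (congrFun hS.1 k) l
    simpa [Matrix.conjTranspose_apply] using h
  have hQk : quad (diaM α S) vk = S k k * α k := by
    simp [quad, diaM, hvk, ite_mul, mul_ite, Finset.sum_ite_eq', Finset.sum_ite_eq]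
  have hQl : quad (diaM α S) vl = S l l * α l := by
    simp [quad, diaM, hvl, ite_mul, mul_ite, Finset.sum_ite_eq', Finset.sum_ite_eq]
  have hQkl : quad (diaM α S) vkl
      = S k k * α k + S l l * α l + S k l * min (α k) (α l) + S k l * min (α k) (α l) := by
    rw [← hsym]
    simp [quad, diaM, hvkl, hvk, hvl, ite_mul, mul_ite, add_mul, mul_add,
      Finset.sum_add_distrib, Finset.sum_ite_eq', Finset.sum_ite_eq, min_comm (α l) (α k),
      hsym]
    ring
  have hS3 : ∑ j, (1 - a * α j)/α j * (α j * vkl j ^ 2 * S j j + (α j * μ j * vkl j) ^ 2)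
      = (∑ j, (1 - a * α j)/α j * (α j * vk j ^ 2 * S j j + (α j * μ j * vk j) ^ 2))
        + ∑ j, (1 - a * α j)/α j * (α j * vl j ^ 2 * S j j + (α j * μ j * vl j) ^ 2) := by
    rw [← Finset.sum_add_distrib]
    refine Finset.sum_congr rfl fun j _ => ?_
    have hv : vk j * vl j = 0 := by
      by_cases h1 : j = k
      · subst h1; simp [hvk, hvl, hkl]
      · simp [hvk, h1]
    have hv2 : vkl j ^ 2 = vk j ^ 2 + vl j ^ 2 := by
      have : vkl j = vk j + vl j := rfl
      rw [this]
      linear_combination 2 * hv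
    linear_combination ((1 - a * α j)/α j * (α j * S j j + α j ^ 2 * μ j ^ 2)) * hv2
  have E1 := wvag_var a α μ S P h2 hchar vk
  have E2 := wvag_var a α μ S P h2 hchar vl
  have E3 := wvag_var a α μ S P h2 hchar vkl
  simp only [hdotk, hCk, hQk] at E1
  simp only [hdotl, hCl, hQl] at E2
  simp only [hdotkl, hCkl, hQkl] at E3
  rw [hS3] at E3
  have hI1 : ∫ x, (x k + x l) ∂P = (∫ x, x k ∂P) + ∫ x, x l ∂P := integral_add Ik Il
  have hI2 : ∫ x, (x k + x l) ^ 2 ∂P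
      = (∫ x, x k ^ 2 ∂P) + (2 * ∫ x, x k * x l ∂P + ∫ x, x l ^ 2 ∂P) := by
    have hpt : ∀ x : Fin n → ℝ, (x k + x l) ^ 2 = x k ^ 2 + (2 * (x k * x l) + x l ^ 2) :=
      fun x => by ring
    simp_rw [hpt]
    have Ia : Integrable (fun x : Fin n → ℝ => 2 * (x k * x l) + x l ^ 2) P :=
      (Ikl.const_mul 2).add Il2
    have Ib : Integrable (fun x : Fin n → ℝ => 2 * (x k * x l)) P := Ikl.const_mul 2
    rw [integral_add Ik2 Ia, integral_add Ib Il2, integral_const_mul]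
  rw [hI1, hI2] at E3
  linear_combination (E3 - E1 - E2) / 2
end
end
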